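/- arXiv:1111.0483 — 2 statements merged into one kernel-verified Lean document; each statement's English description precedes it below -/
import Mathlib

section
/- Let X = X₁ × ⋯ × X_n be a product of nonempty finite sets with |X_i| = N_i, and let K ⊆ {1,…,n}. Let E_K be the set of strictly positive probability distributions P on X such that P(x) = P(y) whenever x_i = y_i for all i ∈ K. Then: (a) E_K is an exponential family on X of dimension ∏_{i∈K} N_i − 1; (b) sup_P inf_{Q∈E_K} D(P‖Q) = ∑_{i∉K} log N_i; and (c) every exponential family E' on X of dimension strictly less than ∏_{i∈K} N_i − 1 satisfies sup_P inf_{Q∈E'} D(P‖Q) > ∑_{i∉K} log N_i. -/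
open scoped BigOperators Classical

noncomputable section

variable {X : Type*}

/-- A probability distribution on a finite set `X`. -/
def IsProb [Fintype X] (P : X → ℝ) : Prop :=
  (∀ x, 0 ≤ P x) ∧ ∑ x, P x = 1

/-- Information divergence `D(P‖Q)` with values in `EReal`, equal to `⊤` if the
support of `P` is not contained in the support of `Q`.  (The convention
`0 · log 0 = 0` holds automatically since `Real.log 0 = 0`.) -/
def KL [Fintype X] (P Q : X → ℝ) : EReal :=
  if ∀ x, Q x = 0 → P x = 0 then ((∑ x, P x * Real.log (P x / Q x) : ℝ) : EReal) else ⊤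

/-- The exponential family with strictly positive reference measure `ν` and extended
tangent space `T` (a subspace of `ℝ^X` containing the constants): the set of strictly
positive probability distributions `P` with `log (P/ν) ∈ T`. -/
def expFam [Fintype X] (ν : X → ℝ) (T : Submodule ℝ (X → ℝ)) : Set (X → ℝ) :=
  {P | (∀ x, 0 < P x) ∧ ∑ x, P x = 1 ∧ (fun x => Real.log (P x / ν x)) ∈ T}

/-- `sup_P inf_{Q ∈ E} D(P‖Q)`, supremum over all probability distributions `P`. -/
def maxDiv [Fintype X] (E : Set (X → ℝ)) : EReal :=
  ⨆ P ∈ {P : X → ℝ | IsProb P}, ⨅ Q ∈ E, KL P Q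

/-- The orthogonal complement of `T` in `ℝ^X` w.r.t. the standard inner product
(the normal space of the exponential family with extended tangent space `T`). -/
def orthSpace [Fintype X] (T : Submodule ℝ (X → ℝ)) : Set (X → ℝ) :=
  {u | ∀ t ∈ T, ∑ x, u x * t x = 0}

/-- A circuit vector of a set `N ⊆ ℝ^X`: a nonzero element whose support is minimal,
i.e. every `u ∈ N` with `supp u ⊆ supp v` is a scalar multiple of `v`. -/
def IsCircuitVector (N : Set (X → ℝ)) (v : X → ℝ) : Prop :=
  v ∈ N ∧ v ≠ 0 ∧ ∀ u ∈ N, Function.support u ⊆ Function.support v → ∃ α : ℝ, u = α • v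

/-- A circuit of `N`: the support of a circuit vector. -/
def IsCircuit (N : Set (X → ℝ)) (σ : Set X) : Prop :=
  ∃ v, IsCircuitVector N v ∧ σ = Function.support v

/-- The closed partition model of the partition given by the equivalence relation `r`:
all probability distributions constant on each block. -/
def partModel [Fintype X] (r : X → X → Prop) : Set (X → ℝ) :=
  {Q | IsProb Q ∧ ∀ x y, r x y → Q x = Q y}

/-- The partition exponential family of the partition given by the equivalence
relation `r`: all strictly positive probability distributions constant on each block. -/
def partExpFam [Fintype X] (r : X → X → Prop) : Set (X → ℝ) :=
  {P | (∀ x, 0 < P x) ∧ ∑ x, P x = 1 ∧ ∀ x y, r x y → P x = P y}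

/-- The set `X̲` of points not annihilated by all of `N`. -/
def underlineSet (N : Set (X → ℝ)) : Set X := {x | ∃ v ∈ N, v x ≠ 0}

/-- The relation `x ∼ y` : every `v ∈ N` with `v x ≠ 0` has `v y ≠ 0`. -/
def coRel (N : Set (X → ℝ)) (x y : X) : Prop := ∀ v ∈ N, v x ≠ 0 → v y ≠ 0

/-- `Z` is an equivalence class of `∼` on `X̲`. -/
def IsClassOf (N : Set (X → ℝ)) (Z : Set X) : Prop :=
  ∃ x ∈ underlineSet N, Z = {y | coRel N x y}

end


set_option linter.unusedSectionVars false
set_option linter.unusedVariables false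

section MyAux
variable {X : Type*} [Fintype X]

lemma negent_ge (P : X → ℝ) (h0 : ∀ x, 0 ≤ P x) (h1 : ∑ x, P x = 1) :
    -Real.log ((Finset.univ.filter (fun x => P x ≠ 0)).card) ≤ ∑ x, P x * Real.log (P x) := by
  classical
  set S := Finset.univ.filter (fun x => P x ≠ 0) with hS
  have hsum : ∑ x ∈ S, P x = 1 := by
    rw [← h1]; exact Finset.sum_filter_ne_zero _
  have hScard : 0 < (S.card : ℝ) := by
    have : S.Nonempty := by
      by_contra h
      rw [Finset.not_nonempty_iff_eq_empty] at h
      rw [h] at hsum; simp at hsum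
    exact_mod_cast Finset.card_pos.mpr this
  have hterm : ∀ x ∈ S, P x * Real.log (1 / ((S.card : ℝ) * P x)) ≤ 1 / (S.card : ℝ) - P x := by
    intro x hx
    have hPx : 0 < P x := lt_of_le_of_ne (h0 x) (Ne.symm (by simpa [hS] using hx))
    have harg : 0 < 1 / ((S.card : ℝ) * P x) := by positivity
    have hl := Real.log_le_sub_one_of_pos harg
    have : P x * Real.log (1 / ((S.card : ℝ) * P x)) ≤ P x * (1 / ((S.card : ℝ) * P x) - 1) :=
      mul_le_mul_of_nonneg_left hl (le_of_lt hPx)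
    refine this.trans (le_of_eq ?_)
    rw [mul_sub, mul_one_div]
    have : P x / ((S.card : ℝ) * P x) = 1 / (S.card : ℝ) := by
      rw [eq_div_iff (ne_of_gt hScard)]; field_simp
    rw [this, mul_one]
  have hsum2 : ∑ x ∈ S, P x * Real.log (1 / ((S.card : ℝ) * P x)) ≤ 0 := by
    calc ∑ x ∈ S, P x * Real.log (1 / ((S.card : ℝ) * P x))
        ≤ ∑ x ∈ S, (1 / (S.card : ℝ) - P x) := Finset.sum_le_sum hterm
      _ = 0 := by rw [Finset.sum_sub_distrib, Finset.sum_const, hsum, nsmul_eq_mul, mul_one_div_cancel (ne_of_gt hScard), sub_self]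
  have hexpand : ∀ x ∈ S, P x * Real.log (1 / ((S.card : ℝ) * P x))
      = -(P x * Real.log (S.card : ℝ)) - P x * Real.log (P x) := by
    intro x hx
    have hPx : P x ≠ 0 := by simpa [hS] using hx
    rw [one_div, Real.log_inv, Real.log_mul (ne_of_gt hScard) hPx]
    ring
  rw [Finset.sum_congr rfl hexpand] at hsum2
  have hext : ∑ x ∈ S, P x * Real.log (P x) = ∑ x, P x * Real.log (P x) := by
    apply Finset.sum_subset (Finset.subset_univ S)
    intro x _ hx
    have : P x = 0 := by by_contra h; exact hx (by simp [hS, h])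
    simp [this]
  rw [Finset.sum_sub_distrib] at hsum2
  rw [Finset.sum_neg_distrib, ← Finset.sum_mul, hsum, hext] at hsum2
  linarith

lemma gibbs_aux (Q : X → ℝ) (h0 : ∀ x, 0 < Q x) (h1 : ∑ x, Q x = 1) :
    ∑ x, Real.log (Q x) ≤ -((Fintype.card X : ℝ) * Real.log (Fintype.card X)) := by
  classical
  have hne : Nonempty X := by
    by_contra h
    rw [not_nonempty_iff] at h
    rw [Finset.sum_of_isEmpty] at h1
    norm_num at h1
  have hNpos : 0 < (Fintype.card X : ℝ) := by exact_mod_cast Fintype.card_pos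
  set N : ℝ := (Fintype.card X : ℝ)
  have hterm : ∀ x : X, Real.log (Q x) + Real.log N ≤ N * Q x - 1 := by
    intro x
    have h := Real.log_le_sub_one_of_pos (mul_pos hNpos (h0 x))
    rwa [Real.log_mul (ne_of_gt hNpos) (ne_of_gt (h0 x)), add_comm] at h
  have := Finset.sum_le_sum (fun x (_ : x ∈ Finset.univ) => hterm x)
  rw [Finset.sum_add_distrib, Finset.sum_sub_distrib, ← Finset.mul_sum, h1,
    Finset.sum_const, Finset.sum_const, Finset.card_univ] at this
  simp only [nsmul_eq_mul, mul_one] at this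
  linarith

lemma gibbs_strict (Q : X → ℝ) (h0 : ∀ x, 0 ≤ Q x) (h1 : ∑ x, Q x = 1)
    (x₀ : X) (hx0 : Q x₀ ≠ (Fintype.card X : ℝ)⁻¹) (hpos : ∀ x, 0 < Q x) :
    ∑ x, Real.log (Q x) < -((Fintype.card X : ℝ) * Real.log (Fintype.card X)) := by
  classical
  have hne : Nonempty X := ⟨x₀⟩
  have hNpos : 0 < (Fintype.card X : ℝ) := by exact_mod_cast Fintype.card_pos
  set N : ℝ := (Fintype.card X : ℝ)
  have hterm : ∀ x : X, Real.log (Q x) + Real.log N ≤ N * Q x - 1 := by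
    intro x
    have h := Real.log_le_sub_one_of_pos (mul_pos hNpos (hpos x))
    rwa [Real.log_mul (ne_of_gt hNpos) (ne_of_gt (hpos x)), add_comm] at h
  have hstrict : Real.log (Q x₀) + Real.log N < N * Q x₀ - 1 := by
    have hne1 : N * Q x₀ ≠ 1 := by
      intro h
      exact hx0 (by field_simp at h ⊢; linarith)
    have h := Real.log_lt_sub_one_of_pos (mul_pos hNpos (hpos x₀)) hne1
    rwa [Real.log_mul (ne_of_gt hNpos) (ne_of_gt (hpos x₀)), add_comm] at h
  have := Finset.sum_lt_sum (fun x (_ : x ∈ Finset.univ) => hterm x) ⟨x₀, Finset.mem_univ _, hstrict⟩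
  rw [Finset.sum_add_distrib, Finset.sum_sub_distrib, ← Finset.mul_sum, h1,
    Finset.sum_const, Finset.sum_const, Finset.card_univ] at this
  simp only [nsmul_eq_mul, mul_one] at this
  linarith


lemma exists_small_support_aux (W : Submodule ℝ (X → ℝ)) :
    ∀ n (U : X → ℝ), (∀ x, 0 ≤ U x) → (Finset.univ.filter (fun x => U x ≠ 0)).card = n →
    ∃ P : X → ℝ, (∀ x, 0 ≤ P x) ∧ (∀ w ∈ W, ∑ x, P x * w x = ∑ x, U x * w x) ∧
      (Finset.univ.filter (fun x => P x ≠ 0)).card ≤ Module.finrank ℝ W := by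
  classical
  intro n
  induction n using Nat.strong_induction_on with
  | _ n ih =>
  intro U hU0 hcard
  by_cases hle : n ≤ Module.finrank ℝ W
  · exact ⟨U, hU0, fun w _ => rfl, hcard ▸ hle⟩
  push_neg at hle
  set S := Finset.univ.filter (fun x => U x ≠ 0) with hSdef
  let ev : X → Module.Dual ℝ W := fun x => (LinearMap.proj x).comp W.subtype
  have hnli : ¬ LinearIndependent ℝ (fun x : {y // y ∈ S} => ev x.1) := by
    intro hli
    have h2 := hli.fintype_card_le_finrank
    rw [Fintype.card_coe, Subspace.dual_finrank_eq] at h2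
    rw [hcard] at h2
    omega
  obtain ⟨g, hgsum, i0, hgi0⟩ := Fintype.not_linearIndependent_iff.mp hnli
  set u : X → ℝ := fun x => if h : x ∈ S then g ⟨x, h⟩ else 0 with hudef
  have hu_supp : ∀ x, x ∉ S → u x = 0 := by
    intro x hx; simp [hudef, hx]
  have hu_orth : ∀ w ∈ W, ∑ x, u x * w x = 0 := by
    intro w hw
    have happ := congrArg (fun f : Module.Dual ℝ W => f ⟨w, hw⟩) hgsum
    simp only [LinearMap.sum_apply, LinearMap.smul_apply, LinearMap.zero_apply] at happ
    have : ∑ x, u x * w x = ∑ x ∈ S, u x * w x := by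
      refine (Finset.sum_subset (Finset.subset_univ S) ?_).symm
      intro x _ hx; rw [hu_supp x hx, zero_mul]
    rw [this, ← Finset.sum_attach S (fun x => u x * w x)]
    have : ∀ x : {y // y ∈ S}, u x.1 * w x.1 = g x • (ev x.1) ⟨w, hw⟩ := by
      intro x
      simp only [hudef, x.2, dif_pos, Subtype.coe_eta, smul_eq_mul, ev,
        LinearMap.comp_apply, LinearMap.proj_apply, Submodule.coe_subtype]
    rw [Finset.sum_congr rfl (fun x _ => this x)]
    exact happ
  have hu_ne : u i0.1 ≠ 0 := by
    simpa [hudef, i0.2, Subtype.coe_eta] using hgi0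
  -- replace u by v having a positive value
  obtain ⟨v, hv_supp, hv_orth, hv_pos⟩ :
      ∃ v : X → ℝ, (∀ x, x ∉ S → v x = 0) ∧ (∀ w ∈ W, ∑ x, v x * w x = 0) ∧ ∃ x, 0 < v x := by
    rcases lt_or_gt_of_ne hu_ne with h | h
    · refine ⟨-u, fun x hx => by simp [hu_supp x hx], fun w hw => ?_, ⟨i0.1, by simpa using h⟩⟩
      simp only [Pi.neg_apply, neg_mul, Finset.sum_neg_distrib, hu_orth w hw, neg_zero]
    · exact ⟨u, hu_supp, hu_orth, ⟨i0.1, h⟩⟩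
  set A := S.filter (fun x => 0 < v x) with hAdef
  have hAne : A.Nonempty := by
    obtain ⟨x, hx⟩ := hv_pos
    refine ⟨x, Finset.mem_filter.mpr ⟨?_, hx⟩⟩
    by_contra hxS
    rw [hv_supp x hxS] at hx; exact lt_irrefl _ hx
  obtain ⟨x₀, hx₀A, hmin⟩ := Finset.exists_min_image A (fun x => U x / v x) hAne
  have hx₀S : x₀ ∈ S := (Finset.mem_filter.mp hx₀A).1
  have hvx₀ : 0 < v x₀ := (Finset.mem_filter.mp hx₀A).2
  have hUx₀ : 0 < U x₀ := lt_of_le_of_ne (hU0 x₀) (Ne.symm (by simpa [hSdef] using hx₀S))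
  set t := U x₀ / v x₀ with htdef
  have ht : 0 < t := div_pos hUx₀ hvx₀
  set P := fun x => U x - t * v x with hPdef
  have hP0 : ∀ x, 0 ≤ P x := by
    intro x
    rcases le_or_gt (v x) 0 with h | h
    · simp only [hPdef]
      nlinarith [hU0 x, mul_nonneg ht.le (neg_nonneg.mpr h)]
    · have hxA : x ∈ A := by
        refine Finset.mem_filter.mpr ⟨?_, h⟩
        by_contra hxS
        rw [hv_supp x hxS] at h; exact lt_irrefl _ h
      have := hmin x hxA
      have : t * v x ≤ U x := by
        rw [htdef]
        calc U x₀ / v x₀ * v x ≤ U x / v x * v x :=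
          mul_le_mul_of_nonneg_right this (le_of_lt h)
        _ = U x := by field_simp
      simp only [hPdef]; linarith
  have hPmom : ∀ w ∈ W, ∑ x, P x * w x = ∑ x, U x * w x := by
    intro w hw
    simp only [hPdef, sub_mul, Finset.sum_sub_distrib]
    have h2 : ∑ x, t * v x * w x = t * ∑ x, v x * w x := by
      rw [Finset.mul_sum]; exact Finset.sum_congr rfl fun x _ => by ring
    rw [h2, hv_orth w hw, mul_zero, sub_zero]
  have hPx₀ : P x₀ = 0 := by
    simp only [hPdef, htdef]; field_simp; ring
  have hPsupp : Finset.univ.filter (fun x => P x ≠ 0) ⊆ S.erase x₀ := by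
    intro x hx
    rw [Finset.mem_filter] at hx
    refine Finset.mem_erase.mpr ⟨?_, ?_⟩
    · rintro rfl; exact hx.2 hPx₀
    · by_contra hxS
      exact hx.2 (by simp only [hPdef, hu_supp, hv_supp x hxS, mul_zero, sub_zero]
                     simpa [hSdef] using hxS)
  have hcard' : (Finset.univ.filter (fun x => P x ≠ 0)).card < n := by
    calc (Finset.univ.filter (fun x => P x ≠ 0)).card ≤ (S.erase x₀).card :=
        Finset.card_le_card hPsupp
      _ < S.card := Finset.card_erase_lt_of_mem hx₀S
      _ = n := hcard
  obtain ⟨P', hP'0, hP'mom, hP'card⟩ := ih _ hcard' P hP0 rfl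
  exact ⟨P', hP'0, fun w hw => (hP'mom w hw).trans (hPmom w hw), hP'card⟩


lemma partC [Nonempty X] (ν : X → ℝ) (T : Submodule ℝ (X → ℝ)) (hν : ∀ x, 0 < ν x)
    (h1T : (fun _ => (1:ℝ)) ∈ T) (d M : ℕ) (hM : 0 < M) (hd : 0 < d)
    (hcard : Fintype.card X = d * M) (hk : Module.finrank ℝ T < d) :
    ((Real.log (M:ℝ) : ℝ) : EReal) < maxDiv (expFam ν T) := by
  classical
  set E := expFam ν T with hE
  have hNpos : 0 < Fintype.card X := Fintype.card_pos
  set N : ℕ := Fintype.card X with hNdef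
  have hNr : (0:ℝ) < N := by exact_mod_cast hNpos
  have hMr : (0:ℝ) < M := by exact_mod_cast hM
  have hdr : (0:ℝ) < d := by exact_mod_cast hd
  have hlogN : Real.log N = Real.log d + Real.log M := by
    rw [hcard]; push_cast; exact Real.log_mul (ne_of_gt hdr) (ne_of_gt hMr)
  -- E is nonempty
  have hZ : (0:ℝ) < ∑ y, ν y := Finset.sum_pos (fun y _ => hν y) Finset.univ_nonempty
  set ν₀ : X → ℝ := fun x => ν x / (∑ y, ν y) with hν₀
  have hν₀E : ν₀ ∈ E := by
    refine ⟨fun x => div_pos (hν x) hZ, ?_, ?_⟩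
    · rw [hν₀, ← Finset.sum_div]; field_simp
    · have heq : (fun x => Real.log (ν₀ x / ν x)) = (Real.log (∑ y, ν y)⁻¹) • (fun _ => (1:ℝ)) := by
        funext x
        have : ν₀ x / ν x = (∑ y, ν y)⁻¹ := by
          simp only [hν₀]
          rw [div_right_comm, div_self (ne_of_gt (hν x)), one_div]
        simp [this]
      rw [heq]; exact T.smul_mem _ h1T
  have hk1 : 1 ≤ Module.finrank ℝ T := by
    have hnt : Nontrivial T := by
      refine ⟨⟨⟨_, h1T⟩, 0, ?_⟩⟩
      intro h
      have h2 := congrArg (fun f : T => (f : X → ℝ) (Classical.arbitrary X)) h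
      norm_num at h2
    exact Module.finrank_pos_iff.mpr hnt
  set U : X → ℝ := fun _ => (N:ℝ)⁻¹ with hUdef
  have hUsum : ∑ x, U x = 1 := by
    rw [hUdef]; rw [Finset.sum_const, Finset.card_univ, nsmul_eq_mul, ← hNdef]; field_simp
  have hU0 : ∀ x, 0 ≤ U x := fun x => by rw [hUdef]; positivity
  -- main shared argument
  have main : ∀ (W : Submodule ℝ (X → ℝ)) (g : ℝ), T ≤ W →
      (fun x => Real.log (ν x)) ∈ W → (∀ Q ∈ E, ∑ x, Real.log (Q x) ≤ g) →
      ∃ m : ℕ, 1 ≤ m ∧ m ≤ Module.finrank ℝ W ∧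
        ∃ P₀, IsProb P₀ ∧ ∀ Q ∈ E, ((-Real.log m - g / N : ℝ) : EReal) ≤ KL P₀ Q := by
    intro W g hTW hνW hg
    obtain ⟨P₀, hP₀0, hP₀mom, hP₀card⟩ := exists_small_support_aux W _ U hU0 rfl
    set m := (Finset.univ.filter (fun x => P₀ x ≠ 0)).card with hmdef
    have hP₀sum : ∑ x, P₀ x = 1 := by
      have h := hP₀mom _ (hTW h1T)
      simpa [hUsum] using h
    have hm1 : 1 ≤ m := by
      rw [hmdef]
      rw [Nat.succ_le_iff, Finset.card_pos]
      by_contra h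
      rw [Finset.not_nonempty_iff_eq_empty] at h
      have : ∀ x, P₀ x = 0 := by
        intro x
        by_contra hx
        have : x ∈ Finset.univ.filter (fun x => P₀ x ≠ 0) := Finset.mem_filter.mpr ⟨Finset.mem_univ _, hx⟩
        rw [h] at this; exact absurd this (Finset.notMem_empty x)
      rw [Finset.sum_congr rfl (fun x _ => this x)] at hP₀sum
      simp at hP₀sum
    refine ⟨m, hm1, hP₀card, P₀, ⟨hP₀0, hP₀sum⟩, ?_⟩
    intro Q hQ
    obtain ⟨hQpos, hQsum, hQT⟩ := hQ
    rw [KL, if_pos (fun x hx => absurd hx (ne_of_gt (hQpos x))), EReal.coe_le_coe_iff]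
    have hlogQW : (fun x => Real.log (Q x)) ∈ W := by
      have hmem := W.add_mem (hTW hQT) hνW
      have : (fun x => Real.log (Q x / ν x)) + (fun x => Real.log (ν x))
          = fun x => Real.log (Q x) := by
        funext x
        simp only [Pi.add_apply]
        rw [Real.log_div (ne_of_gt (hQpos x)) (ne_of_gt (hν x))]; ring
      rwa [this] at hmem
    have hmomQ : ∑ x, P₀ x * Real.log (Q x) = (N:ℝ)⁻¹ * ∑ x, Real.log (Q x) := by
      rw [hP₀mom _ hlogQW, hUdef, Finset.mul_sum]
    have hsplit : ∑ x, P₀ x * Real.log (P₀ x / Q x)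
        = ∑ x, P₀ x * Real.log (P₀ x) - ∑ x, P₀ x * Real.log (Q x) := by
      rw [← Finset.sum_sub_distrib]
      apply Finset.sum_congr rfl
      intro x _
      rcases eq_or_ne (P₀ x) 0 with h | h
      · simp [h]
      · rw [Real.log_div h (ne_of_gt (hQpos x))]; ring
    rw [hsplit, hmomQ]
    have h1 : -Real.log m ≤ ∑ x, P₀ x * Real.log (P₀ x) := negent_ge P₀ hP₀0 hP₀sum
    have h2 : (N:ℝ)⁻¹ * ∑ x, Real.log (Q x) ≤ (N:ℝ)⁻¹ * g :=
      mul_le_mul_of_nonneg_left (hg Q ⟨hQpos, hQsum, hQT⟩) (by positivity)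
    have h3 : (N:ℝ)⁻¹ * g = g / N := by ring
    linarith
  by_cases hUE : U ∈ E
  · -- case A : uniform is in the family, so log ν ∈ T
    have hνT : (fun x => Real.log (ν x)) ∈ T := by
      obtain ⟨-, -, hUT⟩ := hUE
      have heq : (fun x => Real.log (ν x))
          = (Real.log (N:ℝ)⁻¹) • (fun _ => (1:ℝ)) - (fun x => Real.log (U x / ν x)) := by
        funext x
        simp only [Pi.sub_apply, Pi.smul_apply, smul_eq_mul, mul_one]
        rw [hUdef, Real.log_div (by positivity) (ne_of_gt (hν x))]
        ring
      rw [heq]; exact T.sub_mem (T.smul_mem _ h1T) hUT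
    obtain ⟨m, hm1, hmle, P₀, hP₀, hbound⟩ := main T (-((N:ℝ) * Real.log N)) le_rfl hνT
      (fun Q hQ => gibbs_aux Q hQ.1 hQ.2.1)
    have hnum : Real.log M < -Real.log m - (-((N:ℝ) * Real.log N))/N := by
      have he : -((N:ℝ)*Real.log N)/N = -Real.log N := by field_simp
      rw [he, hlogN]
      have hmd : (m:ℝ) < d := by exact_mod_cast lt_of_le_of_lt hmle hk
      have hlt : Real.log m < Real.log d := Real.log_lt_log (by exact_mod_cast hm1) hmd
      linarith
    exact lt_of_lt_of_le (EReal.coe_lt_coe_iff.mpr hnum)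
      (le_iSup₂_of_le P₀ hP₀ (le_iInf₂ hbound))
  · -- case B : uniform not in family
    set W := T ⊔ (ℝ ∙ (fun x => Real.log (ν x))) with hWdef
    have hTW : T ≤ W := le_sup_left
    have hνW : (fun x => Real.log (ν x)) ∈ W :=
      (le_sup_right : (ℝ ∙ (fun x => Real.log (ν x))) ≤ W) (Submodule.mem_span_singleton_self _)
    have hWrank : Module.finrank ℝ W ≤ Module.finrank ℝ T + 1 := by
      have heq := Submodule.finrank_sup_add_finrank_inf_eq T (ℝ ∙ (fun x => Real.log (ν x)))
      have h2 : Module.finrank ℝ (ℝ ∙ (fun x => Real.log (ν x))) ≤ 1 := by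
        by_cases h : (fun x => Real.log (ν x)) = (0 : X → ℝ)
        · rw [h, Submodule.span_zero_singleton]; simp
        · rw [finrank_span_singleton h]
      rw [← hWdef] at heq
      omega
    -- compactness: maximize the product over the closure of E
    set F : (X → ℝ) → ℝ := fun Q => ∏ x, Q x with hFdef
    have hFcont : Continuous F := continuous_finset_prod _ (fun x _ => continuous_apply x)
    set S := closure E with hSdef
    have hCclosed : IsClosed {Q : X → ℝ | (∀ x, 0 ≤ Q x) ∧ ∑ x, Q x = 1} := by
      have : {Q : X → ℝ | (∀ x, 0 ≤ Q x) ∧ ∑ x, Q x = 1}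
          = (⋂ x, {Q : X → ℝ | 0 ≤ Q x}) ∩ {Q : X → ℝ | ∑ x, Q x = 1} := by
        ext Q; simp [Set.mem_iInter]
      rw [this]
      exact IsClosed.inter (isClosed_iInter (fun x => isClosed_le continuous_const (continuous_apply x)))
        (isClosed_eq (continuous_finset_sum _ (fun x _ => continuous_apply x)) continuous_const)
    have hSsub : S ⊆ {Q : X → ℝ | (∀ x, 0 ≤ Q x) ∧ ∑ x, Q x = 1} := by
      apply closure_minimal _ hCclosed
      intro Q hQ; exact ⟨fun x => (hQ.1 x).le, hQ.2.1⟩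
    have hEbnd : Bornology.IsBounded E := by
      apply Bornology.IsBounded.subset (Metric.isBounded_closedBall (x := (0 : X → ℝ)) (r := 1))
      intro Q hQ
      rw [Metric.mem_closedBall, dist_zero_right]
      rw [pi_norm_le_iff_of_nonneg zero_le_one]
      intro x
      rw [Real.norm_eq_abs, abs_of_nonneg (hQ.1 x).le]
      calc Q x ≤ ∑ y, Q y := Finset.single_le_sum (fun y _ => (hQ.1 y).le) (Finset.mem_univ x)
        _ = 1 := hQ.2.1
    have hScomp : IsCompact S := Metric.isCompact_of_isClosed_isBounded isClosed_closure hEbnd.closure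
    have hSne : S.Nonempty := ⟨ν₀, subset_closure hν₀E⟩
    obtain ⟨Pi, hPiS, hPimax⟩ := hScomp.exists_isMaxOn hSne hFcont.continuousOn
    have hmax : ∀ Q ∈ E, F Q ≤ F Pi := fun Q hQ => hPimax (subset_closure hQ)
    have hPiprop := hSsub hPiS
    have hFν₀ : 0 < F ν₀ := Finset.prod_pos (fun x _ => div_pos (hν x) hZ)
    have hFPi : 0 < F Pi := lt_of_lt_of_le hFν₀ (hmax ν₀ hν₀E)
    have hPipos : ∀ x, 0 < Pi x := by
      intro x
      rcases eq_or_lt_of_le (hPiprop.1 x) with h | h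
      · exfalso
        have : F Pi = 0 := Finset.prod_eq_zero (Finset.mem_univ x) h.symm
        rw [this] at hFPi; exact lt_irrefl _ hFPi
      · exact h
    -- Pi ≠ U, else U ∈ closure E implies U ∈ E
    have hUnotS : U ∉ S := by
      intro hUS
      apply hUE
      obtain ⟨seq, hseqE, hlim⟩ := mem_closure_iff_seq_limit.mp hUS
      refine ⟨fun x => by simp only [hUdef]; positivity, hUsum, ?_⟩
      have hTclosed : IsClosed (T : Set (X → ℝ)) := Submodule.closed_of_finiteDimensional T
      have htend : Filter.Tendsto (fun k => fun x => Real.log (seq k x / ν x)) Filter.atTop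
          (nhds (fun x => Real.log (U x / ν x))) := by
        rw [tendsto_pi_nhds]
        intro x
        have hx : Filter.Tendsto (fun k => seq k x) Filter.atTop (nhds (U x)) :=
          tendsto_pi_nhds.mp hlim x
        have hdiv : Filter.Tendsto (fun k => seq k x / ν x) Filter.atTop (nhds (U x / ν x)) :=
          hx.div_const (ν x)
        have hUx : 0 < U x := by simp only [hUdef]; exact inv_pos.mpr hNr
        have hne : U x / ν x ≠ 0 := ne_of_gt (div_pos hUx (hν x))
        exact (Real.continuousAt_log hne).tendsto.comp hdiv
      exact hTclosed.mem_of_tendsto htend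
        (Filter.Eventually.of_forall (fun k => (hseqE k).2.2))
    have hPineU : Pi ≠ U := fun h => hUnotS (h ▸ hPiS)
    have hgap : Real.log (F Pi) < -((N:ℝ) * Real.log N) := by
      obtain ⟨x₀, hx₀⟩ := Function.ne_iff.mp hPineU
      have := gibbs_strict Pi hPiprop.1 hPiprop.2 x₀ (by rw [hUdef] at hx₀; exact hx₀) hPipos
      rw [hFdef]
      rw [Real.log_prod (fun x _ => ne_of_gt (hPipos x))]
      exact this
    have hg : ∀ Q ∈ E, ∑ x, Real.log (Q x) ≤ Real.log (F Pi) := by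
      intro Q hQ
      rw [← Real.log_prod (fun x _ => ne_of_gt (hQ.1 x))]
      exact Real.log_le_log (Finset.prod_pos (fun x _ => hQ.1 x)) (hmax Q hQ)
    obtain ⟨m, hm1, hmle, P₀, hP₀, hbound⟩ := main W (Real.log (F Pi)) hTW hνW hg
    have hnum : Real.log M < -Real.log m - Real.log (F Pi)/N := by
      have hmd : (m:ℝ) ≤ d := by
        have : m ≤ d := le_trans hmle (le_trans hWrank (by omega))
        exact_mod_cast this
      have hlm : Real.log m ≤ Real.log d := Real.log_le_log (by exact_mod_cast hm1) hmd
      have hgN : Real.log (F Pi) / N < -Real.log N := by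
        rw [div_lt_iff₀ hNr]
        calc Real.log (F Pi) < -((N:ℝ) * Real.log N) := hgap
          _ = -Real.log N * N := by ring
      rw [hlogN] at hgN
      linarith [hgN, hlm]
    exact lt_of_lt_of_le (EReal.coe_lt_coe_iff.mpr hnum)
      (le_iSup₂_of_le P₀ hP₀ (le_iInf₂ hbound))


end MyAux

section MyProd
variable {n : ℕ} (Xf : Fin n → Type*) [∀ i, Fintype (Xf i)] [∀ i, Nonempty (Xf i)]
  (K : Finset (Fin n))

/-- subspace of functions depending only on coordinates in K -/
def depOn : Submodule ℝ ((∀ i, Xf i) → ℝ) where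
  carrier := {f | ∀ x y : ∀ i, Xf i, (∀ i ∈ K, x i = y i) → f x = f y}
  add_mem' := by intro a b ha hb x y hxy; simp [ha x y hxy, hb x y hxy]
  zero_mem' := by intro x y _; rfl
  smul_mem' := by intro c a ha x y hxy; simp [ha x y hxy]

lemma one_mem_depOn : (fun _ => (1:ℝ)) ∈ depOn Xf K := fun _ _ _ => rfl

noncomputable def secK : (∀ i : {i // i ∈ K}, Xf i) → (∀ i, Xf i) :=
  fun z i => if h : i ∈ K then z ⟨i, h⟩ else Classical.arbitrary _

lemma secK_spec (z : ∀ i : {i // i ∈ K}, Xf i) (i : Fin n) (h : i ∈ K) :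
    secK Xf K z i = z ⟨i, h⟩ := by simp [secK, h]

noncomputable def depOnEquiv : (depOn Xf K) ≃ₗ[ℝ] ((∀ i : {i // i ∈ K}, Xf i) → ℝ) where
  toFun f := fun z => f.1 (secK Xf K z)
  map_add' f g := rfl
  map_smul' c f := rfl
  invFun g := ⟨fun x => g (fun i => x i.1), by
    intro x y hxy
    simp only
    congr 1
    funext i
    exact hxy i.1 i.2⟩
  left_inv f := by
    ext x
    exact f.2 _ x (fun i hi => secK_spec Xf K _ i hi)
  right_inv g := by
    funext z
    simp only
    congr 1
    funext i
    exact secK_spec Xf K z i.1 i.2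

lemma finrank_depOn : Module.finrank ℝ (depOn Xf K) = ∏ i ∈ K, Fintype.card (Xf i) := by
  rw [LinearEquiv.finrank_eq (depOnEquiv Xf K), Module.finrank_fintype_fun_eq_card,
    Fintype.card_pi]
  exact Finset.prod_coe_sort K (fun i => Fintype.card (Xf i))

lemma card_fiber (x₀ : ∀ i, Xf i) :
    (Finset.univ.filter (fun y : ∀ i, Xf i => ∀ i ∈ K, y i = x₀ i)).card
      = ∏ i ∈ Kᶜ, Fintype.card (Xf i) := by
  classical
  rw [← Fintype.card_subtype]
  have e : {y : ∀ i, Xf i // ∀ i ∈ K, y i = x₀ i} ≃ (∀ i : {i // i ∈ Kᶜ}, Xf i) :=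
    { toFun := fun y i => y.1 i.1
      invFun := fun z => ⟨fun i => if h : i ∈ K then x₀ i
          else z ⟨i, Finset.mem_compl.mpr h⟩, by intro i hi; simp [hi]⟩
      left_inv := by
        intro y
        ext i
        by_cases h : i ∈ K
        · simp [h, y.2 i h]
        · simp [h]
      right_inv := by
        intro z
        funext i
        have h : i.1 ∉ K := Finset.mem_compl.mp i.2
        simp [h] }
  rw [Fintype.card_congr e, Fintype.card_pi]
  exact Finset.prod_coe_sort Kᶜ (fun i => Fintype.card (Xf i))


lemma maxDiv_EK_eq :
    maxDiv {P : (∀ i, Xf i) → ℝ | (∀ x, 0 < P x) ∧ ∑ x, P x = 1 ∧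
      ∀ x y : ∀ i, Xf i, (∀ i ∈ K, x i = y i) → P x = P y}
    = ((∑ i ∈ Kᶜ, Real.log (Fintype.card (Xf i) : ℝ) : ℝ) : EReal) := by
  classical
  set X := ∀ i, Xf i
  set EK : Set (X → ℝ) := {P : X → ℝ | (∀ x, 0 < P x) ∧ ∑ x, P x = 1 ∧
      ∀ x y : X, (∀ i ∈ K, x i = y i) → P x = P y} with hEKdef
  set M : ℕ := ∏ i ∈ Kᶜ, Fintype.card (Xf i) with hMdef
  have hMpos : 0 < M := Finset.prod_pos (fun i _ => Fintype.card_pos)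
  have hMr : (0:ℝ) < (M:ℝ) := by exact_mod_cast hMpos
  have hNr : (0:ℝ) < (Fintype.card X : ℝ) := by exact_mod_cast (Fintype.card_pos (α := X))
  have hL : Real.log (M:ℝ) = ∑ i ∈ Kᶜ, Real.log (Fintype.card (Xf i) : ℝ) := by
    rw [hMdef]
    push_cast
    exact Real.log_prod (fun i _ => by
      have : 0 < (Fintype.card (Xf i) : ℝ) := by exact_mod_cast Fintype.card_pos
      exact ne_of_gt this)
  rw [← hL]
  -- fibers
  have fiber_card : ∀ x : X,
      (Finset.univ.filter (fun y : X => ∀ i ∈ K, y i = x i)).card = M :=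
    fun x => card_fiber Xf K x
  apply le_antisymm
  · -- upper bound
    apply iSup₂_le
    intro P hP
    obtain ⟨hP0, hP1⟩ := hP
    by_contra hcon
    push_neg at hcon
    obtain ⟨r, hr1, hr2⟩ := EReal.lt_iff_exists_real_btwn.mp hcon
    have hδ : 0 < r - Real.log M := by
      have := EReal.coe_lt_coe_iff.mp hr1; linarith
    set δ := r - Real.log M with hδdef
    set ε : ℝ := 1 - Real.exp (-δ) with hεdef
    have hexp_pos : 0 < Real.exp (-δ) := Real.exp_pos _
    have hexp_lt : Real.exp (-δ) < 1 := by
      rw [show (1:ℝ) = Real.exp 0 by simp]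
      exact Real.exp_lt_exp.mpr (by linarith)
    have hε0 : 0 < ε := by simp only [hεdef]; linarith
    have hε1 : (1:ℝ) - ε = Real.exp (-δ) := by simp [hεdef]
    have h1ε : 0 < 1 - ε := hε1 ▸ hexp_pos
    -- marginal
    set pK : X → ℝ := fun x => ∑ y ∈ Finset.univ.filter (fun y : X => ∀ i ∈ K, y i = x i), P y
      with hpKdef
    have hpK0 : ∀ x, 0 ≤ pK x := fun x => Finset.sum_nonneg (fun y _ => hP0 y)
    have hPle : ∀ x, P x ≤ pK x := by
      intro x
      exact Finset.single_le_sum (fun y _ => hP0 y)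
        (Finset.mem_filter.mpr ⟨Finset.mem_univ _, fun i _ => rfl⟩)
    have hpK_const : ∀ x y : X, (∀ i ∈ K, x i = y i) → pK x = pK y := by
      intro x y hxy
      apply Finset.sum_congr _ (fun _ _ => rfl)
      apply Finset.filter_congr
      intro z _
      constructor
      · intro h i hi; rw [h i hi, hxy i hi]
      · intro h i hi; rw [h i hi, ← hxy i hi]
    have hpK_sum : ∑ x, pK x = M := by
      rw [hpKdef]
      simp only [Finset.sum_filter]
      rw [Finset.sum_comm]
      have : ∀ y : X, ∑ x : X, (if ∀ i ∈ K, y i = x i then P y else 0) = M * P y := by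
        intro y
        rw [← Finset.sum_filter, Finset.sum_const]
        have hc : (Finset.univ.filter (fun x : X => ∀ i ∈ K, y i = x i)).card = M := by
          rw [← fiber_card y]
          congr 1
          apply Finset.filter_congr
          intro z _
          exact ⟨fun h i hi => (h i hi).symm, fun h i hi => (h i hi).symm⟩
        rw [hc, nsmul_eq_mul]
      rw [Finset.sum_congr rfl (fun y _ => this y), ← Finset.mul_sum, hP1, mul_one]
    -- the approximating distribution
    set Q : X → ℝ := fun x => (1 - ε) * pK x / M + ε / (Fintype.card X) with hQdef
    have hQpos : ∀ x, 0 < Q x := by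
      intro x
      have h1 : 0 ≤ (1 - ε) * pK x / M := div_nonneg (mul_nonneg h1ε.le (hpK0 x)) hMr.le
      have h2 : 0 < ε / (Fintype.card X : ℝ) := by positivity
      simp only [hQdef]; linarith
    have hQsum : ∑ x, Q x = 1 := by
      simp only [hQdef]
      rw [Finset.sum_add_distrib]
      have e1 : ∑ x : X, (1 - ε) * pK x / M = 1 - ε := by
        rw [show (fun x : X => (1 - ε) * pK x / M) = fun x => ((1-ε)/M) * pK x from
          funext (fun x => by ring)] 
        rw [← Finset.mul_sum, hpK_sum]
        field_simp
      have e2 : ∑ _x : X, ε / (Fintype.card X : ℝ) = ε := by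
        rw [Finset.sum_const, Finset.card_univ, nsmul_eq_mul]
        field_simp
      rw [e1, e2]; ring
    have hQEK : Q ∈ EK := by
      refine ⟨hQpos, hQsum, ?_⟩
      intro x y hxy
      simp only [hQdef, hpK_const x y hxy]
    -- KL bound
    have hKL : KL P Q ≤ ((r : ℝ) : EReal) := by
      rw [KL, if_pos (fun x hx => absurd hx (ne_of_gt (hQpos x)))]
      rw [EReal.coe_le_coe_iff]
      have hterm : ∀ x : X, P x * Real.log (P x / Q x) ≤ P x * (Real.log M - Real.log (1 - ε)) := by
        intro x
        rcases eq_or_lt_of_le (hP0 x) with h | h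
        · rw [← h]; simp
        · have hQx := hQpos x
          have hPQ : P x / Q x ≤ (M:ℝ) / (1 - ε) := by
            have hQge : (1 - ε) * P x / M ≤ Q x := by
              have : (1 - ε) * P x / M ≤ (1 - ε) * pK x / M := by
                apply div_le_div_of_nonneg_right _ hMr.le
                exact mul_le_mul_of_nonneg_left (hPle x) (le_of_lt h1ε)
              have h2 : 0 < ε / (Fintype.card X : ℝ) := by positivity
              simp only [hQdef]; linarith
            rw [div_le_div_iff₀ hQx h1ε]
            calc P x * (1 - ε) = ((1 - ε) * P x / M) * M := by field_simp
              _ ≤ Q x * M := by exact mul_le_mul_of_nonneg_right hQge (le_of_lt hMr)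
              _ = M * Q x := by ring
          have hlog : Real.log (P x / Q x) ≤ Real.log ((M:ℝ) / (1 - ε)) :=
            Real.log_le_log (div_pos h hQx) hPQ
          rw [Real.log_div (ne_of_gt hMr) (ne_of_gt h1ε)] at hlog
          exact mul_le_mul_of_nonneg_left hlog (hP0 x)
      calc ∑ x, P x * Real.log (P x / Q x) ≤ ∑ x, P x * (Real.log M - Real.log (1 - ε)) :=
            Finset.sum_le_sum (fun x _ => hterm x)
        _ = Real.log M - Real.log (1 - ε) := by rw [← Finset.sum_mul, hP1, one_mul]
        _ = Real.log M + δ := by rw [hε1, Real.log_exp]; ring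
        _ = r := by rw [hδdef]; ring
    have : ⨅ Q ∈ EK, KL P Q ≤ ((r:ℝ) : EReal) :=
      le_trans (iInf₂_le Q hQEK) hKL
    exact absurd (lt_of_lt_of_le hr2 this) (lt_irrefl _)
  · -- lower bound
    have hXne : Nonempty X := inferInstance
    set x₀ : X := Classical.arbitrary X with hx₀def
    set P₀ : X → ℝ := fun y => if y = x₀ then 1 else 0 with hP₀def
    have hP₀prob : IsProb P₀ := by
      constructor
      · intro x; simp only [hP₀def]; split <;> norm_num
      · simp [hP₀def]
        rw [Finset.sum_eq_single_of_mem x₀ (Finset.mem_univ _)]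
        · simp
        · intro y _ hy; simp [hy]
    have key : ∀ Q ∈ EK, ((Real.log M : ℝ) : EReal) ≤ KL P₀ Q := by
      intro Q hQ
      obtain ⟨hQpos, hQsum, hQconst⟩ := hQ
      rw [KL, if_pos (fun x hx => absurd hx (ne_of_gt (hQpos x)))]
      rw [EReal.coe_le_coe_iff]
      have hsum : ∑ x, P₀ x * Real.log (P₀ x / Q x) = Real.log (1 / Q x₀) := by
        rw [Finset.sum_eq_single_of_mem x₀ (Finset.mem_univ _)]
        · simp [hP₀def]
        · intro y _ hy; simp [hP₀def, hy]
      rw [hsum, one_div, Real.log_inv]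
      -- M * Q x₀ ≤ 1
      have hfib : ∑ y ∈ Finset.univ.filter (fun y : X => ∀ i ∈ K, y i = x₀ i), Q y
          = (M:ℝ) * Q x₀ := by
        rw [Finset.sum_congr rfl (fun y hy => hQconst y x₀ (Finset.mem_filter.mp hy).2),
          Finset.sum_const, fiber_card, nsmul_eq_mul]
      have hle1 : (M:ℝ) * Q x₀ ≤ 1 := by
        rw [← hfib, ← hQsum]
        exact Finset.sum_le_sum_of_subset_of_nonneg (Finset.subset_univ _)
          (fun y _ _ => le_of_lt (hQpos y))
      have hQx₀ : Q x₀ ≤ 1 / M := by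
        rw [le_div_iff₀ hMr]; linarith
      have := Real.log_le_log (hQpos x₀) hQx₀
      rw [one_div, Real.log_inv] at this
      linarith
    exact le_iSup₂_of_le P₀ hP₀prob (le_iInf₂ key)


end MyProd

/-- on a product `X = X₁ × ⋯ × X_n`, the family `E_K` of strictly
positive distributions depending only on the coordinates in `K` is an exponential
family of dimension `∏_{i∈K} N_i − 1`, its maximal divergence is `∑_{i∉K} log N_i`,
and every exponential family of strictly smaller dimension has strictly larger
maximal divergence. -/
theorem stmt18 (n : ℕ) (Xf : Fin n → Type*) [∀ i, Fintype (Xf i)] [∀ i, Nonempty (Xf i)]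
    (K : Finset (Fin n)) (EK : Set ((∀ i, Xf i) → ℝ))
    (hEK : EK = {P : (∀ i, Xf i) → ℝ | (∀ x, 0 < P x) ∧ ∑ x, P x = 1 ∧
      ∀ x y : ∀ i, Xf i, (∀ i ∈ K, x i = y i) → P x = P y}) :
    (∃ (ν : (∀ i, Xf i) → ℝ) (T : Submodule ℝ ((∀ i, Xf i) → ℝ)),
        (∀ x, 0 < ν x) ∧ (fun _ => (1 : ℝ)) ∈ T ∧ EK = expFam ν T ∧
        Module.finrank ℝ T - 1 = (∏ i ∈ K, Fintype.card (Xf i)) - 1) ∧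
    maxDiv EK = ((∑ i ∈ Kᶜ, Real.log (Fintype.card (Xf i) : ℝ) : ℝ) : EReal) ∧
    (∀ (ν : (∀ i, Xf i) → ℝ) (T : Submodule ℝ ((∀ i, Xf i) → ℝ)),
      (∀ x, 0 < ν x) → (fun _ => (1 : ℝ)) ∈ T →
      Module.finrank ℝ T - 1 < (∏ i ∈ K, Fintype.card (Xf i)) - 1 →
      ((∑ i ∈ Kᶜ, Real.log (Fintype.card (Xf i) : ℝ) : ℝ) : EReal) < maxDiv (expFam ν T)) := by
  classical
  have hEKexp : EK = expFam (fun _ => (1:ℝ)) (depOn Xf K) := by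
    rw [hEK]
    ext P
    constructor
    · rintro ⟨hpos, hsum, hconst⟩
      refine ⟨hpos, hsum, ?_⟩
      intro x y hxy
      simp only [div_one]
      rw [hconst x y hxy]
    · rintro ⟨hpos, hsum, hT⟩
      refine ⟨hpos, hsum, ?_⟩
      intro x y hxy
      have hl := hT x y hxy
      simp only [div_one] at hl
      rw [← Real.exp_log (hpos x), ← Real.exp_log (hpos y), hl]
  refine ⟨⟨fun _ => 1, depOn Xf K, fun _ => one_pos, one_mem_depOn Xf K, hEKexp,
      by rw [finrank_depOn]⟩, ?_, ?_⟩
  · rw [hEK]; exact maxDiv_EK_eq Xf K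
  · intro ν T hν h1T hlt
    set d := ∏ i ∈ K, Fintype.card (Xf i) with hd_def
    set M := ∏ i ∈ Kᶜ, Fintype.card (Xf i) with hM_def
    have hd : 0 < d := Finset.prod_pos (fun i _ => Fintype.card_pos)
    have hM : 0 < M := Finset.prod_pos (fun i _ => Fintype.card_pos)
    have hL : (∑ i ∈ Kᶜ, Real.log (Fintype.card (Xf i) : ℝ)) = Real.log (M : ℝ) := by
      rw [hM_def]
      push_cast
      exact (Real.log_prod (fun i _ => by
        have : (0:ℝ) < (Fintype.card (Xf i) : ℝ) := by exact_mod_cast Fintype.card_pos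
        exact ne_of_gt this)).symm
    rw [hL]
    have hcard : Fintype.card (∀ i, Xf i) = d * M := by
      rw [Fintype.card_pi, hd_def, hM_def, Finset.prod_mul_prod_compl]
    have hk1 : 1 ≤ Module.finrank ℝ T := by
      have hnt : Nontrivial T := by
        refine ⟨⟨⟨_, h1T⟩, 0, ?_⟩⟩
        intro h
        have h2 := congrArg (fun f : T => (f : (∀ i, Xf i) → ℝ) (Classical.arbitrary _)) h
        norm_num at h2
      exact Module.finrank_pos_iff.mpr hnt
    have hk : Module.finrank ℝ T < d := by omega
    exact partC ν T hν h1T d M hM hd hcard hk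
end

section
/- Let X be a finite set, let A : X → ℝ^h be a map (sufficient statistics), and let E be the exponential family on X with uniform reference measure and extended tangent space T equal to the linear span of the constant functions together with the coordinate functions x ↦ (A(x))_i for i = 1, …, h. Then there exists a partition X' of X such that E equals the set of strictly positive probability distributions constant on each block of X' if and only if the set {A(x) : x ∈ X} ⊆ ℝ^h is affinely independent. -/
open scoped BigOperators Classical

lemma mem_of_orth {X : Type*} [Fintype X] (T : Submodule ℝ (X → ℝ)) (f : X → ℝ)
    (hf : ∀ w : X → ℝ, (∀ t ∈ T, ∑ x, w x * t x = 0) → ∑ x, w x * f x = 0) : f ∈ T := by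
  classical
  let e : (X → ℝ) ≃ₗ[ℝ] EuclideanSpace ℝ X := (WithLp.linearEquiv 2 ℝ (X → ℝ)).symm
  let T' : Submodule ℝ (EuclideanSpace ℝ X) := T.map (e : (X → ℝ) →ₗ[ℝ] EuclideanSpace ℝ X)
  have h1 : e f ∈ T' := by
    rw [← Submodule.orthogonal_orthogonal T', Submodule.mem_orthogonal]
    intro w hw
    have key : ∑ x, w x * f x = 0 := by
      apply hf
      intro t ht
      have h2 := (Submodule.mem_orthogonal _ _).1 hw (e t) (Submodule.mem_map_of_mem ht)
      simpa [PiLp.inner_apply, RCLike.inner_apply, mul_comm, e] using h2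
    simpa [PiLp.inner_apply, RCLike.inner_apply, mul_comm, e] using key
  obtain ⟨t, ht, het⟩ := h1
  rwa [← e.injective het]

/-- an exponential family with uniform reference measure and extended
tangent space spanned by the constants and the coordinate functions of a sufficient
statistics `A : X → ℝ^h` is a partition exponential family iff the set
`{A x : x ∈ X}` is affinely independent. -/
theorem stmt19 (X : Type*) [Fintype X] [Nonempty X] (h : ℕ) (A : X → Fin h → ℝ)
    (T : Submodule ℝ (X → ℝ))
    (hT : T = Submodule.span ℝ
      ({fun _ => (1 : ℝ)} ∪ Set.range (fun i : Fin h => fun x : X => A x i))) :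
    (∃ r : X → X → Prop, Equivalence r ∧ expFam (fun _ => 1) T = partExpFam r) ↔
      AffineIndependent ℝ (fun p : Set.range A => (p : Fin h → ℝ)) := by
  classical
  have h1T : (fun _ : X => (1:ℝ)) ∈ T := hT ▸ Submodule.subset_span (Or.inl rfl)
  have hAT : ∀ i, (fun x => A x i) ∈ T := fun i => hT ▸ Submodule.subset_span (Or.inr ⟨i, rfl⟩)
  have hconst : ∀ c : ℝ, (fun _ : X => c) ∈ T := fun c => by
    have he : (fun _ : X => c) = c • (fun _ : X => (1:ℝ)) := by funext x; simp
    rw [he]; exact T.smul_mem c h1T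
  have hZpos : ∀ t : X → ℝ, 0 < ∑ x, Real.exp (t x) := fun t =>
    Finset.sum_pos (fun x _ => Real.exp_pos _) Finset.univ_nonempty
  -- the Gibbs distribution of t ∈ T belongs to the exponential family
  have hmem : ∀ t ∈ T, (fun x => Real.exp (t x) / (∑ y, Real.exp (t y))) ∈ expFam (fun _ => 1) T := by
    intro t ht
    refine ⟨fun x => div_pos (Real.exp_pos _) (hZpos t), ?_, ?_⟩
    · rw [← Finset.sum_div, div_self (hZpos t).ne']
    · have heq : (fun x => Real.log ((Real.exp (t x) / (∑ y, Real.exp (t y))) / 1))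
          = fun x => t x - Real.log (∑ y, Real.exp (t y)) := by
        funext x
        rw [div_one, Real.log_div (Real.exp_pos _).ne' (hZpos t).ne', Real.log_exp]
      rw [heq]
      exact T.sub_mem ht (hconst _)
  constructor
  · rintro ⟨r, hr, hE⟩
    -- Step A: every t ∈ T is constant on r-classes
    have stepA : ∀ t ∈ T, ∀ x y, r x y → t x = t y := by
      intro t ht x y hxy
      have hP := hmem t ht
      rw [hE] at hP
      have h2 := hP.2.2 x y hxy
      have hz := (hZpos t).ne'
      field_simp at h2
      exact Real.exp_injective h2
    -- Step B: every function constant on r-classes is in T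
    have stepB : ∀ g : X → ℝ, (∀ x y, r x y → g x = g y) → g ∈ T := by
      intro g hg
      have hP : (fun x => Real.exp (g x) / (∑ y, Real.exp (g y))) ∈ partExpFam r := by
        refine ⟨fun x => div_pos (Real.exp_pos _) (hZpos g), ?_, fun x y hxy => by dsimp only; rw [hg x y hxy]⟩
        rw [← Finset.sum_div, div_self (hZpos g).ne']
      rw [← hE] at hP
      have h4 := hP.2.2
      have heq : (fun x => Real.log ((Real.exp (g x) / (∑ y, Real.exp (g y))) / 1))
          = fun x => g x - Real.log (∑ y, Real.exp (g y)) := by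
        funext x
        rw [div_one, Real.log_div (Real.exp_pos _).ne' (hZpos g).ne', Real.log_exp]
      rw [heq] at h4
      have h5 : g = (fun x => g x - Real.log (∑ y, Real.exp (g y)))
          + (fun _ => Real.log (∑ y, Real.exp (g y))) := by
        funext x; simp
      rw [h5]
      exact T.add_mem h4 (hconst _)
    -- A is constant on r-classes
    have hA : ∀ x y, r x y → A x = A y := fun x y hxy => funext fun i => stepA _ (hAT i) x y hxy
    -- fiber indicators are in T
    have hind : ∀ x0 : X, (fun x => if A x = A x0 then (1:ℝ) else 0) ∈ T := by
      intro x0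
      apply stepB
      intro x y hxy
      rw [hA x y hxy]
    rw [affineIndependent_iff]
    intro s w hw0 hw1 i hi
    obtain ⟨x0, hx0⟩ := i.2
    have hδ := hind x0
    rw [hT] at hδ
    have hSeq : ({fun _ => (1:ℝ)} ∪ Set.range (fun i : Fin h => fun x : X => A x i) : Set (X → ℝ))
        = Set.range (fun o : Option (Fin h) =>
            Option.elim o (fun _ : X => (1:ℝ)) (fun i x => A x i)) := by
      ext f
      constructor
      · rintro (hf | ⟨i, rfl⟩)
        · exact ⟨none, hf.symm⟩
        · exact ⟨some i, rfl⟩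
      · rintro ⟨o, rfl⟩
        cases o with
        | none => exact Or.inl rfl
        | some j => exact Or.inr ⟨j, rfl⟩
    rw [hSeq, Submodule.mem_span_range_iff_exists_fun] at hδ
    obtain ⟨c, hc⟩ := hδ
    have hval : ∀ x : X, (if A x = A x0 then (1:ℝ) else 0) = c none + ∑ j, c (some j) * A x j := by
      intro x
      have h6 := congrFun hc x
      simpa [Finset.sum_apply, Fintype.sum_option] using h6.symm
    have hcoord : ∀ j, ∑ e ∈ s, w e * (e : Fin h → ℝ) j = 0 := by
      intro j
      have h8 := congrFun hw1 j
      simpa [Finset.sum_apply] using h8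
    set xOf : {p // p ∈ Set.range A} → X := fun e => Classical.choose e.2 with hxOf
    have hrep : ∀ e : {p // p ∈ Set.range A}, A (xOf e) = (e : Fin h → ℝ) :=
      fun e => Classical.choose_spec e.2
    have key : ∑ e ∈ s, w e * (if A (xOf e) = A x0 then (1:ℝ) else 0) = w i := by
      have hterm : ∀ e ∈ s, w e * (if A (xOf e) = A x0 then (1:ℝ) else 0)
          = if e = i then w e else 0 := by
        intro e _
        rw [hrep e, hx0]
        by_cases hei : e = i
        · simp [hei]
        · have : ¬ ((e : Fin h → ℝ) = (i : Fin h → ℝ)) := fun hc' => hei (Subtype.ext hc')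
          simp [hei, this]
      rw [Finset.sum_congr rfl hterm, Finset.sum_ite_eq' s i w, if_pos hi]
    have key2 : ∑ e ∈ s, w e * (if A (xOf e) = A x0 then (1:ℝ) else 0) = 0 := by
      have hterm2 : ∀ e ∈ s, w e * (if A (xOf e) = A x0 then (1:ℝ) else 0)
          = w e * c none + ∑ j, w e * (c (some j) * (e : Fin h → ℝ) j) := by
        intro e _
        rw [hval (xOf e)]
        simp_rw [hrep e]
        rw [mul_add, Finset.mul_sum]
      rw [Finset.sum_congr rfl hterm2, Finset.sum_add_distrib, ← Finset.sum_mul, hw0, zero_mul,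
        zero_add, Finset.sum_comm]
      apply Finset.sum_eq_zero
      intro j _
      have : ∑ e ∈ s, w e * (c (some j) * (e : Fin h → ℝ) j)
          = c (some j) * ∑ e ∈ s, w e * (e : Fin h → ℝ) j := by
        rw [Finset.mul_sum]
        exact Finset.sum_congr rfl fun e _ => by ring
      rw [this, hcoord j, mul_zero]
    rw [← key, key2]
  · intro hAi
    refine ⟨fun x y => A x = A y,
      ⟨fun x => rfl, fun hxy => hxy.symm, fun h1 h2 => h1.trans h2⟩, ?_⟩
    ext P
    constructor
    · rintro ⟨hpos, hsum, ht⟩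
      refine ⟨hpos, hsum, ?_⟩
      intro x y hxy
      have hfib : ∀ t ∈ T, t x = t y := by
        intro t htt
        rw [hT] at htt
        induction htt using Submodule.span_induction with
        | mem f hf =>
          rcases hf with hf | ⟨i, rfl⟩
          · rw [Set.mem_singleton_iff] at hf; subst hf; rfl
          · simpa using congrFun hxy i
        | zero => rfl
        | add f g _ _ hf hg => simp [hf, hg]
        | smul a f _ hf => simp [hf]
      have h7 := hfib _ ht
      dsimp only at h7
      rw [div_one, div_one] at h7
      calc P x = Real.exp (Real.log (P x)) := (Real.exp_log (hpos x)).symm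
        _ = Real.exp (Real.log (P y)) := by rw [h7]
        _ = P y := Real.exp_log (hpos y)
    · rintro ⟨hpos, hsum, hfib⟩
      refine ⟨hpos, hsum, ?_⟩
      apply mem_of_orth
      intro w hw
      simp only [div_one]
      haveI : Fintype {p // p ∈ Set.range A} := Set.fintypeRange A
      set gcl : X → {p // p ∈ Set.range A} := fun x => ⟨A x, ⟨x, rfl⟩⟩ with hgcl
      set u : {p // p ∈ Set.range A} → ℝ :=
        fun a => ∑ x ∈ Finset.univ.filter (fun x => gcl x = a), w x with hu
      have hu0 : ∑ a, u a = 0 := by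
        rw [hu]
        rw [Finset.sum_fiberwise Finset.univ gcl w]
        have := hw _ h1T
        simpa using this
      have hcoordT : ∀ j, ∑ x, w x * A x j = 0 := fun j => hw _ (hAT j)
      have hu1 : ∑ a, u a • ((a : {p // p ∈ Set.range A}) : Fin h → ℝ) = 0 := by
        funext j
        have h9 : (∑ a, u a • ((a : {p // p ∈ Set.range A}) : Fin h → ℝ)) j
            = ∑ a, u a * ((a : {p // p ∈ Set.range A}) : Fin h → ℝ) j := by
          simp [Finset.sum_apply]
        rw [show ((0 : Fin h → ℝ) j) = 0 from rfl] at *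
        rw [h9]
        have h10 : ∀ a : {p // p ∈ Set.range A},
            u a * ((a : {p // p ∈ Set.range A}) : Fin h → ℝ) j
            = ∑ x ∈ Finset.univ.filter (fun x => gcl x = a), w x * A x j := by
          intro a
          rw [hu, Finset.sum_mul]
          apply Finset.sum_congr rfl
          intro x hx
          have hgx : gcl x = a := (Finset.mem_filter.1 hx).2
          have : A x = (a : Fin h → ℝ) := by rw [← hgx]
          rw [this]
        rw [Finset.sum_congr rfl fun a _ => h10 a,
          Finset.sum_fiberwise Finset.univ gcl (fun x => w x * A x j)]
        exact hcoordT j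
      have hu2 : ∀ a, u a = 0 := fun a =>
        affineIndependent_iff.1 hAi Finset.univ u hu0 hu1 a (Finset.mem_univ a)
      rw [← Finset.sum_fiberwise Finset.univ gcl (fun x => w x * Real.log (P x))]
      apply Finset.sum_eq_zero
      intro a _
      obtain ⟨x1, hx1⟩ := a.2
      have hterm : ∀ x ∈ Finset.univ.filter (fun x => gcl x = a),
          w x * Real.log (P x) = w x * Real.log (P x1) := by
        intro x hx
        have hgx : gcl x = a := (Finset.mem_filter.1 hx).2
        have hAx : A x = A x1 := by
          have : A x = (a : Fin h → ℝ) := by rw [← hgx]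
          rw [this, hx1]
        rw [hfib x x1 hAx]
      rw [Finset.sum_congr rfl hterm, ← Finset.sum_mul]
      have : ∑ x ∈ Finset.univ.filter (fun x => gcl x = a), w x = u a := rfl
      rw [this, hu2 a, zero_mul]
end
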